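/- (Optimal update matrix minimizes the covariance trace.) Let Σ be a symmetric positive definite real d×d matrix and C a real d×d matrix, and define f(M) := trace(M Σ Mᵀ + M C + Cᵀ Mᵀ) for real d×d matrices M. Then f(M) − f(M₀) = trace((M − M₀) Σ (M − M₀)ᵀ) ≥ 0 for all M, where M₀ := −Cᵀ Σ^{-1}; hence M₀ is a global minimizer of f. -/

import Mathlib

open Matrix

lemma trace_nonneg_of_posSemidef {d : ℕ} {A : Matrix (Fin d) (Fin d) ℝ}
    (hA : A.PosSemidef) : 0 ≤ A.trace := by
  rw [Matrix.trace]
  apply Finset.sum_nonneg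
  intro i _
  have := hA.2 (Finsupp.single i 1)
  simpa [Matrix.mulVec_single, dotProduct, Pi.single_apply, Finset.sum_ite_eq,
    Matrix.diag] using this

/-- Optimal update matrix minimizes the covariance trace: for `Σ` symmetric positive
definite and `f(M) = trace(M Σ Mᵀ + M C + Cᵀ Mᵀ)`, the choice `M₀ = −Cᵀ Σ⁻¹` satisfies
`f(M) − f(M₀) = trace((M − M₀) Σ (M − M₀)ᵀ) ≥ 0` for every `M`; hence `M₀` is a global
minimizer of `f`. -/
theorem optimal_update_matrix_minimizes_trace (d : ℕ)
    (S C : Matrix (Fin d) (Fin d) ℝ) (hS : S.PosDef) :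
    ∀ M : Matrix (Fin d) (Fin d) ℝ,
      (M * S * Mᵀ + M * C + Cᵀ * Mᵀ).trace - ((-(Cᵀ * S⁻¹)) * S * (-(Cᵀ * S⁻¹))ᵀ
          + (-(Cᵀ * S⁻¹)) * C + Cᵀ * (-(Cᵀ * S⁻¹))ᵀ).trace
        = ((M - (-(Cᵀ * S⁻¹))) * S * (M - (-(Cᵀ * S⁻¹)))ᵀ).trace ∧
      0 ≤ ((M - (-(Cᵀ * S⁻¹))) * S * (M - (-(Cᵀ * S⁻¹)))ᵀ).trace ∧
      ((-(Cᵀ * S⁻¹)) * S * (-(Cᵀ * S⁻¹))ᵀ + (-(Cᵀ * S⁻¹)) * C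
          + Cᵀ * (-(Cᵀ * S⁻¹))ᵀ).trace ≤ (M * S * Mᵀ + M * C + Cᵀ * Mᵀ).trace := by
  intro M
  have hSt : Sᵀ = S := hS.isHermitian.eq
  have hdet : IsUnit S.det := hS.det_pos.ne'.isUnit
  have hSinvT : S⁻¹ᵀ = S⁻¹ := by rw [Matrix.transpose_nonsing_inv, hSt]
  have hSS : S * S⁻¹ = 1 := Matrix.mul_nonsing_inv S hdet
  have hSS' : S⁻¹ * S = 1 := Matrix.nonsing_inv_mul S hdet
  set M₀ := -(Cᵀ * S⁻¹) with hM0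
  have hM0S : M₀ * S = -Cᵀ := by
    rw [hM0, neg_mul, Matrix.mul_assoc, hSS', Matrix.mul_one]
  have hM0T : M₀ᵀ = -(S⁻¹ * C) := by
    rw [hM0, Matrix.transpose_neg, Matrix.transpose_mul, hSinvT, Matrix.transpose_transpose]
  have hA : M * S * M₀ᵀ = -(M * C) := by
    rw [hM0T, Matrix.mul_neg, Matrix.mul_assoc M S, ← Matrix.mul_assoc S S⁻¹ C, hSS,
      Matrix.one_mul]
  have hB : M₀ * S * Mᵀ = -(Cᵀ * Mᵀ) := by
    rw [hM0S, Matrix.neg_mul]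
  have hC : M₀ * S * M₀ᵀ = Cᵀ * S⁻¹ * C := by
    rw [hM0S, hM0T, Matrix.neg_mul, Matrix.mul_neg, neg_neg, Matrix.mul_assoc]
  have expand : (M - M₀) * S * (M - M₀)ᵀ
      = M * S * Mᵀ - M * S * M₀ᵀ - M₀ * S * Mᵀ + M₀ * S * M₀ᵀ := by
    rw [Matrix.transpose_sub]; noncomm_ring
  have key : (M - M₀) * S * (M - M₀)ᵀ
      = M * S * Mᵀ + M * C + Cᵀ * Mᵀ + Cᵀ * S⁻¹ * C := by
    rw [expand, hA, hB, hC]; noncomm_ring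
  have hf0 : M₀ * S * M₀ᵀ + M₀ * C + Cᵀ * M₀ᵀ = -(Cᵀ * S⁻¹ * C) := by
    rw [hC, hM0T, hM0, Matrix.mul_neg, ← Matrix.mul_assoc, Matrix.neg_mul]
    noncomm_ring
  have heq : (M * S * Mᵀ + M * C + Cᵀ * Mᵀ).trace - (M₀ * S * M₀ᵀ + M₀ * C + Cᵀ * M₀ᵀ).trace
      = ((M - M₀) * S * (M - M₀)ᵀ).trace := by
    rw [key, hf0]
    simp [Matrix.trace_add, Matrix.trace_neg]
  have hpos : (0:ℝ) ≤ ((M - M₀) * S * (M - M₀)ᵀ).trace := by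
    have h := hS.posSemidef.mul_mul_conjTranspose_same (M - M₀)
    have h2 : ((M - M₀) * S * (M - M₀)ᵀ).PosSemidef := by
      simpa [Matrix.conjTranspose_eq_transpose_of_trivial] using h
    exact trace_nonneg_of_posSemidef h2
  exact ⟨heq, hpos, by linarith⟩
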